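/- arXiv:1411.5565 — 3 statements merged into one kernel-verified Lean document; each statement's English description precedes it below -/
import Mathlib

section
/- Let f : A → A be a continuous map of degree d with |d| > 1, let p and q be fixed points of f, and let γ be a path in A from p to q. If for some integer k ≥ 1 the paths γ and fᵏ ∘ γ are homotopic with fixed endpoints, then γ and f ∘ γ are homotopic with fixed endpoints. -/
open Set Filter Topology

noncomputable section

/-- The open annulus `A = S¹ × (0,1)`. -/
abbrev Ann : Type := Circle × (Set.Ioo (0:ℝ) 1)

/-- The universal cover `Ã = ℝ × (0,1)`. -/
abbrev AnnTil : Type := ℝ × (Set.Ioo (0:ℝ) 1)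

/-- The covering projection `π(x,y) = (exp(2πix), y)`. -/
def pr : AnnTil → Ann := fun z => (Circle.exp (2 * Real.pi * z.1), z.2)

/-- Translation by an integer in the first coordinate: `z + k`. -/
def tr (z : AnnTil) (k : ℤ) : AnnTil := (z.1 + k, z.2)

/-- `F` is a lift of `f`. -/
def IsLift (f : Ann → Ann) (F : AnnTil → AnnTil) : Prop :=
  Continuous F ∧ pr ∘ F = f ∘ pr

/-- `f` has degree `d`: some lift satisfies `F(z+1) = F(z) + d`. -/
def HasDegree (f : Ann → Ann) (d : ℤ) : Prop :=
  ∃ F : AnnTil → AnnTil, IsLift f F ∧ ∀ z, F (tr z 1) = tr (F z) d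

/-- A subset of the annulus is essential if it is not contained in any
connected, simply connected open subset. -/
def IsEssential (K : Set Ann) : Prop :=
  ¬ ∃ U : Set Ann, IsOpen U ∧ IsConnected U ∧ SimplyConnectedSpace U ∧ K ⊆ U

/-- Nielsen equivalence of fixed points `p`, `q` of `g`: there is a path `γ`
from `p` to `q` homotopic (rel endpoints) to `g ∘ γ`. -/
def NielsenEquiv (g : Ann → Ann) (p q : Ann) : Prop :=
  ∃ (hg : Continuous g) (hp : g p = p) (hq : g q = q) (γ : Path p q),
    γ.Homotopic ((γ.map hg).cast hp.symm hq.symm)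

/-- `g` has exactly `N` Nielsen classes of fixed points. -/
def HasExactlyNielsenClasses (g : Ann → Ann) (N : ℕ) : Prop :=
  ∃ S : Finset Ann, S.card = N ∧ (∀ p ∈ S, g p = p) ∧
    (∀ p ∈ S, ∀ q ∈ S, p ≠ q → ¬ NielsenEquiv g p q) ∧
    (∀ p, g p = p → ∃ q ∈ S, NielsenEquiv g p q)

/-- `Fill K`: the union of `K` with the connected components of its
complement whose closure is compact. -/
def Fill (K : Set Ann) : Set Ann :=
  K ∪ {x | x ∈ Kᶜ ∧ IsCompact (closure (connectedComponentIn Kᶜ x))}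

section AuxProof

open unitInterval

noncomputable section AuxCircle

/-- exponential with period 1 -/
def ee (x : ℝ) : Circle := Circle.exp (2 * Real.pi * x)

lemma ee_add (x y : ℝ) : ee (x + y) = ee x * ee y := by
  simp [ee, mul_add, Circle.exp_add]

lemma ee_zero : ee 0 = 1 := by simp [ee, Circle.exp_zero]

lemma ee_sub (x y : ℝ) : ee (x - y) = ee x / ee y := by
  have h := ee_add (x - y) y
  simp only [sub_add_cancel] at h
  rw [h, mul_div_cancel_right]

lemma ee_eq_one_iff {x : ℝ} : ee x = 1 ↔ ∃ n : ℤ, x = n := by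
  rw [ee, Circle.exp_eq_one]
  constructor
  · rintro ⟨n, hn⟩
    refine ⟨n, ?_⟩
    have hπ : Real.pi ≠ 0 := Real.pi_ne_zero
    have : x * (2 * Real.pi) = (n:ℝ) * (2 * Real.pi) := by linarith [hn]
    exact mul_right_cancel₀ (by positivity) this
  · rintro ⟨n, rfl⟩
    exact ⟨n, by ring⟩

lemma ee_eq_iff {x y : ℝ} : ee x = ee y ↔ ∃ n : ℤ, x - y = n := by
  rw [← ee_eq_one_iff, ee_sub, div_eq_one]

lemma continuous_ee : Continuous ee := by
  exact Circle.exp.continuous.comp (continuous_const.mul continuous_id)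

/-- local inverse of ee -/
def lphi (z : Circle) : ℝ := Complex.arg z / (2 * Real.pi)

lemma ee_lphi (z : Circle) : ee (lphi z) = z := by
  have hπ : (2 * Real.pi) ≠ 0 := by positivity
  rw [ee, lphi, mul_div_cancel₀ _ hπ, Circle.exp_arg]

lemma lphi_one : lphi 1 = 0 := by simp [lphi]

lemma continuousAt_lphi {z : Circle} (hz : (z : ℂ) ≠ -1) : ContinuousAt lphi z := by
  have hmem : (z : ℂ) ∈ Complex.slitPlane := by
    rw [Complex.mem_slitPlane_iff]
    rcases lt_or_ge 0 (z : ℂ).re with h | h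
    · exact Or.inl h
    · right
      intro him
      apply hz
      have habs := Circle.norm_coe z
      have : (z:ℂ).re ^ 2 + (z:ℂ).im ^ 2 = 1 := by
        have h2 := Complex.sq_norm (z:ℂ)
        rw [habs, Complex.normSq_apply] at h2
        nlinarith [h2]
      rw [him] at this
      have : (z:ℂ).re = -1 := by nlinarith
      apply Complex.ext <;> simp [this, him]
  have h1 : ContinuousAt Complex.arg (z : ℂ) := Complex.continuousAt_arg hmem
  have h2 : ContinuousAt (fun w : Circle => (w : ℂ)) z := continuous_subtype_val.continuousAt
  exact (h1.comp h2).div_const _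

/-- antipodal criterion -/
lemma ne_neg_one_of_dist_lt {u v : Circle} (h : dist u v < 2) : ((u / v : Circle) : ℂ) ≠ -1 := by
  intro hc
  have : (u : ℂ) = -(v : ℂ) := by
    have := Circle.coe_div u v
    rw [hc] at this
    field_simp at this
    linear_combination -this
  rw [show dist u v = dist (u:ℂ) (v:ℂ) from rfl, this, dist_eq_norm] at h
  have : -(v:ℂ) - v = -(2 * v) := by ring
  rw [this] at h
  simp [norm_mul, Circle.norm_coe] at h


end AuxCircle

noncomputable section Lifts

open unitInterval

lemma int_valued_const {X : Type*} [TopologicalSpace X] [PreconnectedSpace X] {g : X → ℝ}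
    (hg : Continuous g) (hint : ∀ x, ∃ n : ℤ, g x = n) (x y : X) : g x = g y := by
  have hlc : IsLocallyConstant g := by
    rw [IsLocallyConstant.iff_exists_open]
    intro x
    obtain ⟨n, hn⟩ := hint x
    refine ⟨g ⁻¹' (Ioo (n - 1/2 : ℝ) (n + 1/2)), isOpen_Ioo.preimage hg, ?_, ?_⟩
    · simp [hn]
    · intro y hy
      obtain ⟨m, hm⟩ := hint y
      simp only [mem_preimage, mem_Ioo, hm] at hy
      have : m = n := by
        have h1 : |(m : ℝ) - n| < 1 := by rw [abs_lt]; constructor <;> linarith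
        have h2 : |m - n| < 1 := by exact_mod_cast (by push_cast; exact h1 : |((m - n : ℤ) : ℝ)| < 1)
        have := abs_lt.mp h2; omega
      rw [hm, hn, this]
  exact hlc.apply_eq_of_preconnectedSpace x y

/-- uniqueness of lifts -/
lemma lift_unique {sg : I → Circle} {L M : I → ℝ} (hL : Continuous L) (hM : Continuous M)
    (hLe : ∀ t, ee (L t) = sg t) (hMe : ∀ t, ee (M t) = sg t) (h0 : L 0 = M 0) (t : I) :
    L t = M t := by
  have key := int_valued_const (g := fun t => L t - M t) (hL.sub hM)
    (fun x => by
      have : ee (L x) = ee (M x) := by rw [hLe, hMe]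
      exact ee_eq_iff.mp this) t 0
  simp only [h0, sub_self] at key
  linarith [key]

/-- comparison of lift endpoints for uniformly close paths -/
lemma lift_end_eq_of_close {sg tu : I → Circle} (hsg : Continuous sg) (htu : Continuous tu)
    (hclose : ∀ t, dist (sg t) (tu t) < 2) (he0 : sg 0 = tu 0) (he1 : sg 1 = tu 1)
    {L M : I → ℝ} (hL : Continuous L) (hM : Continuous M)
    (hLe : ∀ t, ee (L t) = sg t) (hMe : ∀ t, ee (M t) = tu t) (hst : L 0 = M 0) :
    L 1 = M 1 := by
  set h : I → ℝ := fun t => L t - M t - lphi (sg t / tu t) with hh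
  have hcont : Continuous h := by
    rw [continuous_iff_continuousAt]
    intro t
    have h1 : ContinuousAt (fun t : I => sg t / tu t) t := (hsg.div' htu).continuousAt
    have h2 : ContinuousAt lphi (sg t / tu t) :=
      continuousAt_lphi (ne_neg_one_of_dist_lt (hclose t))
    have h3 := ContinuousAt.comp (f := fun t : I => sg t / tu t) h2 h1
    exact ((hL.sub hM).continuousAt).sub h3
  have hint : ∀ t, ∃ n : ℤ, h t = n := by
    intro t
    have : ee (L t - M t) = sg t / tu t := by rw [ee_sub, hLe, hMe]
    have h2 : ee (h t) = 1 := by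
      rw [hh]; simp only
      rw [ee_sub, this, ee_lphi, div_self']
    obtain ⟨n, hn⟩ := ee_eq_one_iff.mp h2
    exact ⟨n, hn⟩
  have key := int_valued_const hcont hint 1 0
  have hz0 : h 0 = 0 := by
    simp only [hh, hst, he0, sub_self, div_self', lphi_one, sub_zero]
  have hz1 : h 1 = L 1 - M 1 := by
    simp only [hh, he1, div_self', lphi_one, sub_zero]
  rw [hz0, hz1] at key
  linarith [key]

lemma abs_min_sub_min {x a b : ℝ} : |min x a - min x b| ≤ |a - b| := by
  rcases le_total x a with h1 | h1 <;> rcases le_total x b with h2 | h2 <;>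
    simp only [min_eq_left, min_eq_right, h1, h2] <;>
    rw [abs_le] <;> constructor <;>
    cases abs_le.mp (le_refl |a - b|) <;> linarith [le_abs_self (a-b), neg_abs_le (a-b)]

/-- existence of lifts of paths in the circle -/
lemma lift_exists {sg : I → Circle} (hsg : Continuous sg) (x₀ : ℝ) (h₀ : ee x₀ = sg 0) :
    ∃ L : I → ℝ, Continuous L ∧ L 0 = x₀ ∧ ∀ t, ee (L t) = sg t := by
  set sb : ℝ → Circle := sg ∘ projIcc (0:ℝ) 1 zero_le_one with hsb
  have hsbc : Continuous sb := hsg.comp continuous_projIcc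
  have hsbu : UniformContinuous sb :=
    (CompactSpace.uniformContinuous_of_continuous hsg).comp
      (LipschitzWith.uniformContinuous (by exact LipschitzWith.projIcc _))
  obtain ⟨δ, hδpos, hδ⟩ := Metric.uniformContinuous_iff.mp hsbu 1 one_pos
  obtain ⟨n, hn⟩ := exists_nat_gt (1/δ)
  set N : ℕ := n + 1 with hN
  have hNpos : 0 < (N:ℝ) := by positivity
  have hNδ : 1 / (N:ℝ) < δ := by
    rw [div_lt_iff₀ hNpos]
    rw [div_lt_iff₀ hδpos] at hn
    calc 1 < δ * n + δ := by nlinarith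
    _ ≤ δ * N := by rw [hN]; push_cast; ring_nf; linarith
  -- distance of consecutive sample points
  have hdist : ∀ (x : ℝ) (j : ℕ), dist (sb (min x ((j+1)/N))) (sb (min x (j/N))) < 1 := by
    intro x j
    apply hδ
    rw [Real.dist_eq]
    have hq : ((j:ℝ)+1)/N - (j:ℝ)/N = 1/N := by field_simp; ring
    calc |min x ((j+1)/N) - min x (j/N)| ≤ |((j:ℝ)+1)/N - j/N| := abs_min_sub_min
    _ = 1/N := by rw [hq, abs_of_pos (by positivity)]
    _ < δ := hNδ
  set term : ℕ → ℝ → ℝ := fun j x => lphi (sb (min x ((j+1)/N)) / sb (min x (j/N))) with hterm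
  set Lb : ℝ → ℝ := fun x => x₀ + ∑ j ∈ Finset.range N, term j x with hLb
  have htermc : ∀ j, Continuous (term j) := by
    intro j
    rw [continuous_iff_continuousAt]
    intro x
    have hin : ContinuousAt (fun x : ℝ => sb (min x ((j+1)/N)) / sb (min x (j/N))) x := by
      apply ContinuousAt.div'
      · exact (hsbc.comp (continuous_id.min continuous_const)).continuousAt
      · exact (hsbc.comp (continuous_id.min continuous_const)).continuousAt
    have h2 : ContinuousAt lphi (sb (min x ((j+1)/N)) / sb (min x (j/N))) := by
      refine continuousAt_lphi (ne_neg_one_of_dist_lt ?_)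
      calc dist (sb (min x ((j+1)/N))) (sb (min x (j/N))) < 1 := hdist x j
      _ < 2 := one_lt_two
    have h3 := ContinuousAt.comp
      (f := fun x : ℝ => sb (min x ((j+1)/N)) / sb (min x (j/N))) h2 hin
    exact h3
  have hLbc : Continuous Lb := by
    apply continuous_const.add
    exact continuous_finset_sum _ (fun j _ => htermc j)
  -- value of ee ∘ Lb
  have heesum : ∀ (m : ℕ) (g : ℕ → ℝ), ee (∑ j ∈ Finset.range m, g j) =
      ∏ j ∈ Finset.range m, ee (g j) := by
    intro m g
    induction m with
    | zero => simp [ee_zero]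
    | succ m ih => rw [Finset.sum_range_succ, Finset.prod_range_succ, ee_add, ih]
  have hkey : ∀ t : I, ee (Lb t) = sg t := by
    intro t
    have ht0 : (0:ℝ) ≤ t := t.2.1
    have ht1 : (t:ℝ) ≤ 1 := t.2.2
    rw [hLb]
    simp only
    rw [ee_add, heesum]
    set fseq : ℕ → Circle := fun j => sb (min (t:ℝ) ((j:ℝ)/(N:ℝ))) with hfseq
    have : ∀ j ∈ Finset.range N, ee (term j t) = fseq (j+1) / fseq j := by
      intro j _
      rw [hterm, hfseq]
      simp only [ee_lphi]
      push_cast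
      rfl
    rw [Finset.prod_congr rfl this, Finset.prod_range_div]
    rw [hfseq]
    simp only
    have hmin1 : min (t:ℝ) ((N:ℝ)/N) = (t:ℝ) := by
      rw [div_self (ne_of_gt hNpos)]; exact min_eq_left ht1
    have hmin0 : min (t:ℝ) ((0:ℕ)/(N:ℝ)) = 0 := by
      simp only [Nat.cast_zero, zero_div]; exact min_eq_right ht0
    simp only [hmin1, hmin0]
    have hsbt : sb (t:ℝ) = sg t := by
      rw [hsb]; simp only [Function.comp_apply, projIcc_val]
    have hsb0 : sb 0 = sg 0 := by
      rw [hsb]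
      simp only [Function.comp_apply]
      congr 1
      ext
      simp [projIcc]
    rw [hsbt, hsb0, h₀]
    refine Circle.coe_injective ?_
    push_cast
    field_simp
  refine ⟨fun t => Lb t, hLbc.comp continuous_subtype_val, ?_, hkey⟩
  rw [hLb]
  simp only [Icc.coe_zero]
  have : ∀ j ∈ Finset.range N, term j 0 = 0 := by
    intro j _
    rw [hterm]
    simp only
    have h1 : min (0:ℝ) (((j:ℝ)+1)/N) = 0 := min_eq_left (by positivity)
    have h2 : min (0:ℝ) ((j:ℝ)/N) = 0 := min_eq_left (by positivity)
    rw [h1, h2, div_self', lphi_one]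
  rw [Finset.sum_congr rfl this]
  simp

end Lifts

noncomputable section HomotopyLift

open unitInterval

/-- same lift endpoints implies homotopic -/
lemma homotopic_of_lift_end_eq {a b : Circle} (sg tu : Path a b)
    {L M : I → ℝ} (hL : Continuous L) (hM : Continuous M)
    (hLe : ∀ t, ee (L t) = sg t) (hMe : ∀ t, ee (M t) = tu t)
    (h0 : L 0 = M 0) (h1 : L 1 = M 1) : sg.Homotopic tu := by
  refine ⟨?_⟩
  have hcont : Continuous (fun st : I × I =>
      ee ((1 - ((st.1 : ℝ))) * L st.2 + ((st.1 : ℝ)) * M st.2)) := by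
    apply continuous_ee.comp
    have hc1 : Continuous (fun st : I × I => (st.1 : ℝ)) :=
      continuous_subtype_val.comp continuous_fst
    have hc2 : Continuous (fun st : I × I => L st.2) := hL.comp continuous_snd
    have hc3 : Continuous (fun st : I × I => M st.2) := hM.comp continuous_snd
    exact ((continuous_const.sub hc1).mul hc2).add (hc1.mul hc3)
  refine { toFun := fun st => ee ((1 - ((st.1 : ℝ))) * L st.2 + ((st.1 : ℝ)) * M st.2),
           continuous_toFun := hcont, map_zero_left := ?_, map_one_left := ?_,
           prop' := ?_ }
  · intro x
    simp only [Icc.coe_zero, sub_zero, one_mul, zero_mul, add_zero]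
    exact hLe x
  · intro x
    simp only [Icc.coe_one, sub_self, zero_mul, one_mul, zero_add]
    exact hMe x
  · intro s x hx
    simp only [Set.mem_insert_iff, Set.mem_singleton_iff] at hx
    rcases hx with rfl | rfl
    · show ee ((1 - ((s:ℝ))) * L 0 + ((s:ℝ)) * M 0) = _
      rw [← h0]
      have : (1 - ((s:ℝ))) * L 0 + ((s:ℝ)) * L 0 = L 0 := by ring
      rw [this]
      simp [hLe 0]
    · show ee ((1 - ((s:ℝ))) * L 1 + ((s:ℝ)) * M 1) = _
      rw [← h1]
      have : (1 - ((s:ℝ))) * L 1 + ((s:ℝ)) * L 1 = L 1 := by ring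
      rw [this]
      simp [hLe 1]

/-- homotopic implies same lift endpoints -/
lemma lift_end_eq_of_homotopic {a b : Circle} {sg tu : Path a b} (h : sg.Homotopic tu)
    {L M : I → ℝ} (hL : Continuous L) (hM : Continuous M)
    (hLe : ∀ t, ee (L t) = sg t) (hMe : ∀ t, ee (M t) = tu t)
    (h0 : L 0 = M 0) : L 1 = M 1 := by
  obtain ⟨H⟩ := h
  have hex : ∀ s : I, ∃ Ls : I → ℝ, Continuous Ls ∧ Ls 0 = L 0 ∧
      ∀ t, ee (Ls t) = H (s, t) := by
    intro s
    have hc : Continuous (fun t : I => H (s, t)) :=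
      H.toHomotopy.continuous.comp (Continuous.prodMk_right s)
    have he : ee (L 0) = (fun t : I => H (s, t)) 0 := by
      simp only
      rw [H.source s, hLe 0, Path.source]
    exact lift_exists hc (L 0) he
  choose Ls hLsc hLs0 hLse using hex
  set g : I → ℝ := fun s => Ls s 1 with hg
  have hlc : IsLocallyConstant g := by
    rw [IsLocallyConstant.iff_exists_open]
    intro s
    set c : C(I, C(I, Circle)) := H.toHomotopy.curry with hc
    refine ⟨{s' | dist (c s') (c s) < 1}, ?_, by simp, ?_⟩
    · have : Continuous (fun s' => dist (c s') (c s)) :=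
        (c.continuous.dist continuous_const)
      exact isOpen_lt this continuous_const
    · intro s' hs'
      simp only [Set.mem_setOf_eq] at hs'
      refine lift_end_eq_of_close (sg := fun t => H (s', t)) (tu := fun t => H (s, t))
        (H.toHomotopy.continuous.comp (Continuous.prodMk_right s'))
        (H.toHomotopy.continuous.comp (Continuous.prodMk_right s))
        ?_ ?_ ?_ (hLsc s') (hLsc s) (hLse s') (hLse s) (by rw [hLs0 s', hLs0 s])
      · intro t
        calc dist (H (s', t)) (H (s, t)) = dist (c s' t) (c s t) := by
              rw [hc]; simp [ContinuousMap.Homotopy.curry]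
        _ ≤ dist (c s') (c s) := ContinuousMap.dist_apply_le_dist t
        _ < 2 := by linarith
      · show H (s', 0) = H (s, 0)
        rw [H.source s', H.source s]
      · show H (s', 1) = H (s, 1)
        rw [H.target s', H.target s]
  have hkey : g 0 = g 1 := hlc.apply_eq_of_preconnectedSpace 0 1
  have hL1 : L 1 = g 0 := by
    have : ∀ t, L t = Ls 0 t := by
      refine lift_unique hL (hLsc 0) hLe (fun t => ?_) (hLs0 0).symm
      rw [hLse 0, H.apply_zero]
      rfl
    exact this 1
  have hM1 : M 1 = g 1 := by
    have : ∀ t, M t = Ls 1 t := by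
      refine lift_unique hM (hLsc 1) hMe (fun t => ?_) (by rw [hLs0 1, h0])
      rw [hLse 1, H.apply_one]
      rfl
    exact this 1
  rw [hL1, hM1, hkey]

end HomotopyLift

section AnnLemmas

lemma ee_int (n : ℤ) : ee n = 1 := ee_eq_one_iff.mpr ⟨n, rfl⟩

lemma ee_sub_int (x : ℝ) (n : ℤ) : ee (x - n) = ee x := by
  rw [ee_sub, ee_int, div_one]

lemma pr_eq (z : AnnTil) : pr z = (ee z.1, z.2) := rfl

lemma tr_tr (z : AnnTil) (m n : ℤ) : tr (tr z m) n = tr z (m + n) :=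
  Prod.ext (by simp only [tr]; push_cast; ring) rfl

lemma tr_zero (z : AnnTil) : tr z 0 = z := by
  simp [tr]

lemma tr_fst (z : AnnTil) (n : ℤ) : (tr z n).1 = z.1 + n := rfl

lemma tr_inj (z : AnnTil) {m n : ℤ} (h : tr z m = tr z n) : m = n := by
  have := congrArg Prod.fst h
  simp only [tr_fst, add_right_inj] at this
  exact_mod_cast this

lemma pr_eq_iff {z w : AnnTil} : pr z = pr w ↔ ∃ n : ℤ, z = tr w n := by
  constructor
  · intro h
    rw [pr_eq, pr_eq, Prod.mk.injEq] at h
    obtain ⟨h1, h2⟩ := h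
    obtain ⟨n, hn⟩ := ee_eq_iff.mp (h1 : ee z.1 = ee w.1)
    refine ⟨n, ?_⟩
    have : z.1 = w.1 + n := by linarith [hn]
    exact Prod.ext this h2
  · rintro ⟨n, rfl⟩
    rw [pr_eq, pr_eq, Prod.mk.injEq, tr_fst]
    constructor
    · rw [show w.1 + (n:ℝ) = w.1 - (-n : ℤ) by push_cast; ring, ee_sub_int]
    · rfl

end AnnLemmas

/-- If `γ ∼ fᵏ ∘ γ` (rel endpoints) for some `k ≥ 1`, then `γ ∼ f ∘ γ`. -/
theorem stmt_4 (f : Ann → Ann) (hf : Continuous f) (d : ℤ)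
    (hdeg : HasDegree f d) (hd : 1 < |d|)
    (p q : Ann) (hp : f p = p) (hq : f q = q) (γ : Path p q)
    (k : ℕ) (hk : 1 ≤ k)
    (hhom : γ.Homotopic ((γ.map (hf.iterate k)).cast
      (Function.iterate_fixed hp k).symm (Function.iterate_fixed hq k).symm)) :
    γ.Homotopic ((γ.map hf).cast hp.symm hq.symm) := by
  classical
  obtain ⟨F, ⟨hFc, hFpr⟩, hFd⟩ := hdeg
  have hprF : ∀ z, pr (F z) = f (pr z) := fun z => congrFun hFpr z
  have hFtr : ∀ (z : AnnTil) (n : ℤ), F (tr z n) = tr (F z) (n * d) := by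
    intro z n
    induction n using Int.induction_on with
    | zero => rw [tr_zero, zero_mul, tr_zero]
    | succ i ih =>
      rw [← tr_tr z i 1, hFd, ih, tr_tr]
      congr 1
      ring
    | pred i ih =>
      have h1 : tr z (-i) = tr (tr z (-i - 1)) 1 := by rw [tr_tr]; congr 1; ring
      have h2 := ih
      rw [h1, hFd] at h2
      have h3 := congrArg (fun w => tr w (-d)) h2
      simp only [tr_tr] at h3
      rw [show d + -d = 0 by ring, tr_zero] at h3
      rw [h3]
      congr 1
      ring
  have hprFj : ∀ (j : ℕ) (z : AnnTil), pr (F^[j] z) = f^[j] (pr z) := by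
    intro j
    induction j with
    | zero => intro z; simp
    | succ j ih =>
      intro z
      rw [Function.iterate_succ_apply', Function.iterate_succ_apply', hprF, ih]
  -- lift the path
  obtain ⟨L, hLc, hL0, hLe⟩ := lift_exists (γ.map continuous_fst).continuous (lphi p.1)
    (by rw [ee_lphi]; exact ((γ.map continuous_fst).source).symm)
  have hLe' : ∀ t : I, ee (L t) = (γ t).1 := hLe
  set Γ : I → AnnTil := fun t => (L t, (γ t).2) with hΓ
  have hΓc : Continuous Γ := hLc.prodMk (continuous_snd.comp γ.continuous)
  have hprΓ : ∀ t, pr (Γ t) = γ t := by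
    intro t
    rw [pr_eq]
    exact Prod.ext (hLe' t) rfl
  have hprP : pr (Γ 0) = p := by rw [hprΓ 0, γ.source]
  have hprQ : pr (Γ 1) = q := by rw [hprΓ 1, γ.target]
  obtain ⟨a, ha⟩ : ∃ n : ℤ, F (Γ 0) = tr (Γ 0) n := by
    rw [← pr_eq_iff, hprF, hprP, hp]
  obtain ⟨b, hb⟩ : ∃ n : ℤ, F (Γ 1) = tr (Γ 1) n := by
    rw [← pr_eq_iff, hprF, hprQ, hq]
  set A : ℕ → ℤ := fun j => Nat.rec 0 (fun _ x => a + x * d) j with hA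
  set B : ℕ → ℤ := fun j => Nat.rec 0 (fun _ x => b + x * d) j with hB
  set S : ℕ → ℤ := fun j => Nat.rec 0 (fun _ x => 1 + x * d) j with hS
  have hFP : ∀ j, F^[j] (Γ 0) = tr (Γ 0) (A j) := by
    intro j
    induction j with
    | zero => rw [Function.iterate_zero_apply]; exact (tr_zero _).symm
    | succ j ih =>
      rw [Function.iterate_succ_apply', ih, hFtr, ha, tr_tr]
  have hFQ : ∀ j, F^[j] (Γ 1) = tr (Γ 1) (B j) := by
    intro j
    induction j with
    | zero => rw [Function.iterate_zero_apply]; exact (tr_zero _).symm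
    | succ j ih =>
      rw [Function.iterate_succ_apply', ih, hFtr, hb, tr_tr]
  have hBA : ∀ j, B j - A j = (b - a) * S j := by
    intro j
    induction j with
    | zero => show (0:ℤ) - 0 = (b - a) * 0; ring
    | succ j ih =>
      have e1 : A (j+1) = a + A j * d := rfl
      have e2 : B (j+1) = b + B j * d := rfl
      have e3 : S (j+1) = 1 + S j * d := rfl
      rw [e1, e2, e3]
      linear_combination d * ih
  have hdS : ∀ j, (d - 1) * S j = d ^ j - 1 := by
    intro j
    induction j with
    | zero => show (d - 1) * 0 = d ^ 0 - 1; ring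
    | succ j ih =>
      have e3 : S (j+1) = 1 + S j * d := rfl
      rw [e3, pow_succ]
      linear_combination d * ih
  have hSk : S k ≠ 0 := by
    intro hzero
    have h2 := hdS k
    rw [hzero, mul_zero] at h2
    have hdk : d ^ k = 1 := by omega
    have habs : |d| ^ k = 1 := by rw [← abs_pow, hdk]; rfl
    have h3 : (2:ℤ) ≤ |d| := hd
    have h4 : (2:ℤ) ^ k ≤ |d| ^ k := pow_le_pow_left₀ (by norm_num) h3 k
    have h5 : (2:ℤ) ≤ 2 ^ k := le_self_pow₀ one_le_two (by omega)
    omega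
  -- lifts of circle components of iterates
  set NN : ℕ → I → ℝ := fun j t => (F^[j] (Γ t)).1 - A j with hNN
  have hNc : ∀ j, Continuous (NN j) :=
    fun j => (continuous_fst.comp ((hFc.iterate j).comp hΓc)).sub continuous_const
  have hNe : ∀ j t, ee (NN j t) = (f^[j] (γ t)).1 := by
    intro j t
    rw [hNN]
    simp only
    rw [ee_sub_int]
    have h1 := congrArg Prod.fst (hprFj j (Γ t))
    rw [hprΓ t] at h1
    rw [show ee ((F^[j] (Γ t)).1) = (pr (F^[j] (Γ t))).1 from rfl, h1]
  have hN0 : ∀ j, NN j 0 = L 0 := by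
    intro j
    rw [hNN]
    simp only [hFP j, tr_fst]
    ring_nf
    rfl
  have hN1 : ∀ j, NN j 1 = L 1 + ((b - a) * S j : ℤ) := by
    intro j
    rw [hNN]
    simp only [hFQ j, tr_fst]
    rw [← hBA j]
    show (Γ 1).1 + (B j : ℝ) - (A j : ℝ) = L 1 + ((B j - A j : ℤ) : ℝ)
    have h5 : (Γ 1).1 = L 1 := rfl
    rw [h5]
    push_cast
    ring
  -- apply the hypothesis
  set dl : Path p q := (γ.map (hf.iterate k)).cast
    (Function.iterate_fixed hp k).symm (Function.iterate_fixed hq k).symm with hdl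
  have hh1 : (γ.map continuous_fst).Homotopic (dl.map continuous_fst) := by
    have h := hhom.map (⟨Prod.fst, continuous_fst⟩ : C(Ann, Circle))
    exact h
  have hLend : L 1 = NN k 1 := by
    refine lift_end_eq_of_homotopic hh1 hLc (hNc k) (fun t => hLe t) (fun t => ?_) (hN0 k).symm
    have h1 : (dl.map continuous_fst) t = (f^[k] (γ t)).1 := by
      have : (dl.map continuous_fst) t = ((dl t) : Ann).1 := rfl
      rw [this]
      have h2 : dl t = f^[k] (γ t) := by
        rw [hdl]
        have := congrFun (Path.cast_coe (γ.map (hf.iterate k))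
          (Function.iterate_fixed hp k).symm (Function.iterate_fixed hq k).symm) t
        rw [this]
        rfl
      rw [h2]
    rw [h1]
    exact hNe k t
  have hba : b = a := by
    rw [hN1 k] at hLend
    have : (((b - a) * S k : ℤ) : ℝ) = 0 := by linarith [hLend]
    have h2 : ((b - a) * S k : ℤ) = 0 := by exact_mod_cast this
    rcases mul_eq_zero.mp h2 with h | h
    · omega
    · exact absurd h hSk
  -- construct the homotopy with f ∘ γ
  set dl1 : Path p q := (γ.map hf).cast hp.symm hq.symm with hdl1
  have H1 : (γ.map continuous_fst).Homotopic (dl1.map continuous_fst) := by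
    refine homotopic_of_lift_end_eq _ _ hLc (hNc 1) (fun t => hLe t) (fun t => ?_)
      (hN0 1).symm ?_
    · have h1 : (dl1.map continuous_fst) t = (f (γ t)).1 := by
        have : (dl1.map continuous_fst) t = ((dl1 t) : Ann).1 := rfl
        rw [this]
        have h2 : dl1 t = f (γ t) := by
          rw [hdl1]
          have := congrFun (Path.cast_coe (γ.map hf) hp.symm hq.symm) t
          rw [this]
          rfl
        rw [h2]
      rw [h1]
      have := hNe 1 t
      rw [Function.iterate_one] at this
      exact this
    · rw [hN1 1, hba]
      simp
  haveI : ContractibleSpace (Set.Ioo (0:ℝ) 1) :=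
    (convex_Ioo (0:ℝ) 1).contractibleSpace ⟨1/2, by norm_num⟩
  have H2 : (γ.map continuous_snd).Homotopic (dl1.map continuous_snd) :=
    SimplyConnectedSpace.paths_homotopic _ _
  have hprod : ((γ.map continuous_fst).prod (γ.map continuous_snd)).Homotopic
      ((dl1.map continuous_fst).prod (dl1.map continuous_snd)) :=
    Nonempty.map2 Path.Homotopic.prodHomotopy H1 H2
  have hγ : γ = (γ.map continuous_fst).prod (γ.map continuous_snd) := by
    ext t <;> rfl
  have hδ : dl1 = (dl1.map continuous_fst).prod (dl1.map continuous_snd) := by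
    ext t <;> rfl
  rw [← hγ, ← hδ] at hprod
  exact hprod

end AuxProof
end
end

section
/- Let f : A → A be a continuous map of degree d with |d| > 1, let F : Ã → Ã be a lift of f, let K ⊆ A be a nonempty compact set with f(K) ⊆ K, and set K̃ = π⁻¹(K) (so that F(K̃) ⊆ K̃). Then there exists a continuous map H : K̃ → ℝ such that: (1) H(z + 1) = H(z) + 1 for all z ∈ K̃; (2) H(F(z)) = d·H(z) for all z ∈ K̃; (3) the function (x,y) ↦ H(x,y) − x is bounded on K̃; (4) for every z ∈ K̃, H(z) = lim_{n→∞} (Fⁿ(z))₁ / dⁿ, where (·)₁ denotes the first coordinate. -/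
open Set Filter Topology

noncomputable section

/-- The semiconjugacy lemma: existence of the function `H` on `π⁻¹(K)`. -/
theorem stmt_11 (f : Ann → Ann) (hf : Continuous f) (d : ℤ)
    (hdeg : HasDegree f d) (hd : 1 < |d|)
    (F : AnnTil → AnnTil) (hF : IsLift f F)
    (hFdeg : ∀ z : AnnTil, F (tr z 1) = tr (F z) d)
    (K : Set Ann) (hKne : K.Nonempty) (hKc : IsCompact K)
    (hKinv : f '' K ⊆ K) :
    ∃ H : AnnTil → ℝ, ContinuousOn H (pr ⁻¹' K) ∧
      (∀ z ∈ pr ⁻¹' K, H (tr z 1) = H z + 1) ∧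
      (∀ z ∈ pr ⁻¹' K, H (F z) = d * H z) ∧
      (∃ C : ℝ, ∀ z ∈ pr ⁻¹' K, |H z - z.1| ≤ C) ∧
      (∀ z ∈ pr ⁻¹' K, Filter.Tendsto
        (fun n : ℕ => (F^[n] z).1 / (d : ℝ) ^ n) Filter.atTop (nhds (H z))) := by

  classical
  obtain ⟨hFc, hFlift⟩ := hF
  have hd2 : (2:ℤ) ≤ |d| := hd
  have hdabs : (2:ℝ) ≤ |(d:ℝ)| := by
    rw [← Int.cast_abs]; exact_mod_cast hd2
  have hd1 : (1:ℝ) < |(d:ℝ)| := lt_of_lt_of_le one_lt_two hdabs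
  have hd0 : (d:ℝ) ≠ 0 := by
    intro h; rw [h] at hd1; simp at hd1; linarith
  set Kt : Set AnnTil := pr ⁻¹' K with hKtdef
  set φ : AnnTil → ℝ := fun z => (F z).1 - d * z.1 with hφdef
  have hφc : Continuous φ := ((continuous_fst.comp hFc)).sub (continuous_const.mul continuous_fst)
  -- translation lemmas
  have htr_add : ∀ (z : AnnTil) (a b : ℤ), tr (tr z a) b = tr z (a + b) := by
    intro z a b; simp [tr]; push_cast; ring
  have htrF : ∀ (z : AnnTil) (k : ℤ), F (tr z k) = tr (F z) (d * k) := by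
    intro z k
    induction k using Int.induction_on with
    | zero => simp [tr]
    | succ n ih =>
        have : tr z (n + 1) = tr (tr z n) 1 := by rw [htr_add]
        rw [this, hFdeg, ih, htr_add]; ring_nf
    | pred n ih =>
        have h1 : tr z (-n) = tr (tr z (-n - 1)) 1 := by rw [htr_add]; ring_nf
        rw [h1, hFdeg] at ih
        have := congrArg (fun w => tr w (-d)) ih
        simp only [htr_add] at this
        rw [show F (tr z (-n - 1)) = tr (F (tr z (-n-1))) (d + -d) by
          rw [show d + -d = 0 from by ring]; simp [tr]] 
        rw [this]; congr 1; ring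
  have hφtr : ∀ (z : AnnTil) (k : ℤ), φ (tr z k) = φ z := by
    intro z k
    have h := htrF z k
    simp only [hφdef]
    rw [h]
    simp only [tr]
    push_cast; ring
  have hprtr : ∀ (z : AnnTil) (k : ℤ), pr (tr z k) = pr z := by
    intro z k
    simp only [pr, tr]
    refine Prod.ext ?_ rfl
    simp only
    rw [Circle.exp_eq_exp]
    exact ⟨k, by push_cast; ring⟩
  have hKttr : ∀ (z : AnnTil) (k : ℤ), z ∈ Kt → tr z k ∈ Kt := by
    intro z k hz; simpa [hKtdef, Set.mem_preimage, hprtr] using hz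
  -- invariance
  have hKtF : ∀ z ∈ Kt, F z ∈ Kt := by
    intro z hz
    have h1 : pr (F z) = f (pr z) := congrFun hFlift z
    simp only [hKtdef, Set.mem_preimage] at hz ⊢
    rw [h1]; exact hKinv ⟨pr z, hz, rfl⟩
  have hKtiter : ∀ (n : ℕ) (z : AnnTil), z ∈ Kt → F^[n] z ∈ Kt := by
    intro n
    induction n with
    | zero => intro z hz; simpa using hz
    | succ n ih =>
        intro z hz
        rw [Function.iterate_succ_apply']
        exact hKtF _ (ih z hz)
  -- bound on φ over Kt
  have hprc : Continuous pr := by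
    refine Continuous.prodMk ?_ continuous_snd
    exact Circle.exp.continuous.comp (continuous_const.mul continuous_fst)
  have hKclosed : IsClosed Kt := (hKc.isClosed).preimage hprc
  obtain ⟨M, hM0, hMb⟩ : ∃ M : ℝ, 0 ≤ M ∧ ∀ z ∈ Kt, |φ z| ≤ M := by
    set S : Set AnnTil := (fun z : AnnTil => z.1) ⁻¹' Set.Icc 0 1 ∩ Kt with hSdef
    have hScomp : IsCompact S := by
      have hsub : S ⊆ Set.Icc (0:ℝ) 1 ×ˢ (Prod.snd '' K) := by
        rintro z ⟨hz1, hz2⟩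
        refine ⟨hz1, ⟨pr z, hz2, rfl⟩⟩
      have hcomp : IsCompact (Set.Icc (0:ℝ) 1 ×ˢ (Prod.snd '' K)) :=
        isCompact_Icc.prod (hKc.image continuous_snd)
      exact hcomp.of_isClosed_subset
        ((isClosed_Icc.preimage continuous_fst).inter hKclosed) hsub
    obtain ⟨M0, hM0b⟩ := hScomp.exists_bound_of_continuousOn hφc.continuousOn
    refine ⟨max M0 0, le_max_right _ _, ?_⟩
    intro z hz
    have hw : tr z (-⌊z.1⌋) ∈ S := by
      constructor
      · simp only [tr, Set.mem_preimage, Set.mem_Icc]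
        push_cast
        constructor
        · linarith [Int.floor_le z.1]
        · linarith [Int.lt_floor_add_one z.1]
      · exact hKttr z _ hz
    have := hM0b _ hw
    rw [hφtr] at this
    calc |φ z| ≤ M0 := by simpa using this
      _ ≤ max M0 0 := le_max_left _ _
  -- the series
  set u : ℕ → ℝ := fun n => M / |(d:ℝ)| ^ (n+1) with hudef
  have hu_sum : Summable u := by
    have : Summable (fun n : ℕ => (M / |(d:ℝ)|) * (|(d:ℝ)|⁻¹) ^ n) := by
      apply Summable.mul_left
      apply summable_geometric_of_lt_one (by positivity)
      rw [inv_lt_one_iff₀]; right; exact hd1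
    refine this.congr fun n => ?_
    simp only [hudef, pow_succ]
    field_simp
    rw [one_div, inv_pow, mul_assoc, inv_mul_cancel₀ (pow_ne_zero _ (abs_ne_zero.mpr hd0)), mul_one]
  set g : ℕ → AnnTil → ℝ := fun n z => φ (F^[n] z) / (d:ℝ) ^ (n+1) with hgdef
  have hgc : ∀ n, Continuous (g n) := by
    intro n
    exact (hφc.comp (hFc.iterate n)).div_const _
  have hgb : ∀ n, ∀ z ∈ Kt, |g n z| ≤ u n := by
    intro n z hz
    have h1 : |φ (F^[n] z)| ≤ M := hMb _ (hKtiter n z hz)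
    simp only [hgdef, hudef, abs_div, abs_pow]
    gcongr
  have hgsum : ∀ z ∈ Kt, Summable (fun n => g n z) := by
    intro z hz
    apply Summable.of_norm_bounded hu_sum
    intro n; simpa using hgb n z hz
  set H : AnnTil → ℝ := fun z => z.1 + ∑' n, g n z with hHdef
  refine ⟨H, ?_, ?_, ?_, ?_, ?_⟩
  -- continuity
  · rw [continuousOn_iff_continuous_restrict]
    have : Continuous (fun z : Kt => ∑' n, g n (z : AnnTil)) := by
      apply continuous_tsum (fun n => (hgc n).comp continuous_subtype_val) hu_sum
      intro n z
      simpa using hgb n z z.2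
    exact (continuous_fst.comp continuous_subtype_val).add this
  -- H (tr z 1) = H z + 1
  · intro z hz
    have hiter_tr : ∀ n : ℕ, F^[n] (tr z 1) = tr (F^[n] z) (d ^ n) := by
      intro n
      induction n with
      | zero => simp
      | succ n ih =>
          rw [Function.iterate_succ_apply', Function.iterate_succ_apply', ih, htrF]
          congr 1; ring
    have heq : ∀ n, g n (tr z 1) = g n z := by
      intro n; simp only [hgdef, hiter_tr, hφtr]
    simp only [hHdef]
    rw [tsum_congr heq]
    simp only [tr]
    push_cast
    ring
  -- semiconjugacy
  · intro z hz
    have hsum0 : Summable (fun n => φ (F^[n] z) / (d:ℝ) ^ n) := by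
      have := (hgsum z hz).mul_left (d:ℝ)
      refine this.congr fun n => ?_
      simp only [hgdef, pow_succ]
      field_simp
    have hzero_add := Summable.tsum_eq_zero_add hsum0
    have hFz1 : (F z).1 = d * z.1 + φ z := by simp only [hφdef]; ring
    have hshift : ∀ n, g n (F z) = φ (F^[n+1] z) / (d:ℝ) ^ (n+1) := by
      intro n; simp only [hgdef, Function.iterate_succ_apply]
    simp only [hHdef]
    rw [show (fun n => g n (F z)) = (fun n => φ (F^[n+1] z) / (d:ℝ) ^ (n+1)) from funext hshift]
    rw [hFz1]
    have hd_tsum : (d:ℝ) * ∑' n, g n z = ∑' n, φ (F^[n] z) / (d:ℝ) ^ n := by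
      rw [← tsum_mul_left]
      congr 1; funext n
      simp only [hgdef, pow_succ]
      field_simp
    rw [mul_add, hd_tsum, hzero_add]
    simp only [pow_zero, div_one, Function.iterate_zero_apply]
    ring
  -- boundedness
  · refine ⟨M / (|(d:ℝ)| - 1), ?_⟩
    intro z hz
    have h1 : |H z - z.1| = |∑' n, g n z| := by simp only [hHdef]; congr 1; ring
    rw [h1]
    calc |∑' n, g n z| ≤ ∑' n, u n := by
          rw [← Real.norm_eq_abs]
          apply tsum_of_norm_bounded (hu_sum.hasSum)
          intro n; simpa using hgb n z hz
      _ ≤ M / (|(d:ℝ)| - 1) := by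
          have hue : ∀ n : ℕ, u n = (M / |(d:ℝ)|) * (|(d:ℝ)|⁻¹) ^ n := by
            intro n
            simp only [hudef, pow_succ]
            field_simp
            rw [one_div, inv_pow, mul_assoc, mul_inv_cancel₀ (pow_ne_zero _ (abs_ne_zero.mpr hd0)), mul_one]
          have : ∑' n, u n = (M / |(d:ℝ)|) * (1 - |(d:ℝ)|⁻¹)⁻¹ := by
            rw [tsum_congr hue, tsum_mul_left, tsum_geometric_of_lt_one (by positivity)
              (by rw [inv_lt_one_iff₀]; right; exact hd1)]
          rw [this]
          have hpos : (0:ℝ) < |(d:ℝ)| - 1 := by linarith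
          rw [le_div_iff₀ hpos]
          have habs : (0:ℝ) < |(d:ℝ)| := by linarith
          have : (1 - |(d:ℝ)|⁻¹)⁻¹ = |(d:ℝ)| / (|(d:ℝ)| - 1) := by
            field_simp
          rw [this]
          field_simp
          exact le_rfl
  -- limit
  · intro z hz
    have hpartial : ∀ n : ℕ, (F^[n] z).1 / (d:ℝ) ^ n = z.1 + ∑ k ∈ Finset.range n, g k z := by
      intro n
      induction n with
      | zero => simp
      | succ n ih =>
          rw [Finset.sum_range_succ, ← add_assoc, ← ih, Function.iterate_succ_apply']
          have hFw : (F (F^[n] z)).1 = d * (F^[n] z).1 + φ (F^[n] z) := by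
            simp only [hφdef]; ring
          rw [hFw, hgdef]
          simp only
          rw [pow_succ]
          field_simp
    have hhs : HasSum (fun n => g n z) (∑' n, g n z) := (hgsum z hz).hasSum
    have := hhs.tendsto_sum_nat
    have h2 : Tendsto (fun n => z.1 + ∑ k ∈ Finset.range n, g k z) atTop (nhds (z.1 + ∑' n, g n z)) :=
      tendsto_const_nhds.add this
    refine h2.congr fun n => (hpartial n).symm
end
end

section
/- Let d be an integer with |d| > 1 and let F : Ã → Ã be a continuous map satisfying F(z + 1) = F(z) + d for all z ∈ Ã. Let x̃ ∈ Ã, k ∈ ℤ and n ≥ 1, and suppose that (Fᵐ(x̃))₁ / dᵐ converges to k/(dⁿ − 1) as m → ∞, where (·)₁ denotes the first coordinate. Define G : Ã → Ã by G(z) = Fⁿ(z) − k. Then (Gᵐ(x̃))₁ / dⁿᵐ converges to 0 as m → ∞. -/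
open Set Filter Topology

noncomputable section

/-- Computation of the asymptotic translation number of `G = Fⁿ - k`. -/
theorem stmt_14 (d : ℤ) (hd : 1 < |d|)
    (F : AnnTil → AnnTil) (hFcont : Continuous F)
    (hFdeg : ∀ z : AnnTil, F (tr z 1) = tr (F z) d)
    (x : AnnTil) (k : ℤ) (n : ℕ) (hn : 1 ≤ n)
    (hlim : Filter.Tendsto (fun m : ℕ => (F^[m] x).1 / (d : ℝ) ^ m)
      Filter.atTop (nhds ((k : ℝ) / ((d : ℝ) ^ n - 1))))
    (G : AnnTil → AnnTil) (hG : ∀ z : AnnTil, G z = tr (F^[n] z) (-k)) :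
    Filter.Tendsto (fun m : ℕ => (G^[m] x).1 / ((d : ℝ) ^ n) ^ m)
      Filter.atTop (nhds 0) := by
  -- basic facts about tr
  have trtr : ∀ (z : AnnTil) (a b : ℤ), tr (tr z a) b = tr z (a + b) := by
    intro z a b
    simp only [tr, Prod.mk.injEq]
    constructor
    · push_cast; ring
    · trivial
  have tr0 : ∀ z : AnnTil, tr z 0 = z := by
    intro z; simp [tr]
  -- Step A: F (tr z j) = tr (F z) (d*j)
  have hA : ∀ (j : ℤ) (z : AnnTil), F (tr z j) = tr (F z) (d * j) := by
    intro j
    induction j using Int.induction_on with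
    | zero => intro z; simp [tr0]
    | succ i ih =>
        intro z
        have h1 : tr z (i + 1) = tr (tr z i) 1 := by rw [trtr]
        rw [h1, hFdeg, ih, trtr]
        ring_nf
    | pred i ih =>
        intro z
        have h1 := hFdeg (tr z (-i - 1))
        rw [trtr] at h1
        have h2 : (-(i:ℤ) - 1 + 1 : ℤ) = -i := by ring
        rw [h2, ih] at h1
        have h3 := congrArg (fun w => tr w (-d)) h1
        simp only [trtr] at h3
        have h4 : (d * -(i:ℤ) + -d : ℤ) = d * (-i - 1) := by ring
        have h5 : (d + -d : ℤ) = 0 := by ring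
        rw [h4, h5, tr0] at h3
        exact h3.symm
  -- Step B: F^[m] (tr z j) = tr (F^[m] z) (d^m * j)
  have hB : ∀ (m : ℕ) (j : ℤ) (z : AnnTil),
      F^[m] (tr z j) = tr (F^[m] z) (d ^ m * j) := by
    intro m
    induction m with
    | zero => intro j z; simp
    | succ m ih =>
        intro j z
        rw [Function.iterate_succ_apply, Function.iterate_succ_apply,
          hA, ih]
        congr 1
        ring
  -- Step C: closed form for G^[m] x
  have hC : ∀ m : ℕ, G^[m] x =
      tr (F^[n * m] x) (-(k * ∑ i ∈ Finset.range m, (d ^ n) ^ i)) := by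
    intro m
    induction m with
    | zero => simp [tr0]
    | succ m ih =>
        rw [Function.iterate_succ_apply', ih, hG, hB]
        have hnm : n * (m + 1) = n + n * m := by ring
        rw [hnm, Function.iterate_add_apply, trtr]
        congr 1
        rw [geom_sum_succ]
        ring
  -- abbreviation
  set q : ℝ := (d : ℝ) ^ n with hq
  have hd2 : (2 : ℝ) ≤ |(d : ℝ)| := by
    have : (2 : ℤ) ≤ |d| := hd
    calc (2:ℝ) = ((2:ℤ):ℝ) := by norm_num
    _ ≤ ((|d| : ℤ) : ℝ) := by exact_mod_cast this
    _ = |(d:ℝ)| := by push_cast; ring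
  have hqabs : 1 < |q| := by
    rw [hq, abs_pow]
    calc (1:ℝ) < 2 ^ n := by
          apply one_lt_pow₀ (by norm_num) (by omega)
    _ ≤ |(d:ℝ)| ^ n := by
          apply pow_le_pow_left₀ (by norm_num) hd2
  have hq1 : q ≠ 1 := by
    intro h; rw [h] at hqabs; simp at hqabs
  have hq0 : q ≠ 0 := by
    intro h; rw [h, abs_zero] at hqabs; linarith
  have hqm1 : q - 1 ≠ 0 := sub_ne_zero.mpr hq1
  -- rewrite the sequence
  have key : ∀ m : ℕ, (G^[m] x).1 / q ^ m =
      (F^[n * m] x).1 / (d : ℝ) ^ (n * m)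
        - ((k : ℝ) / (q - 1) - (k : ℝ) / (q - 1) * (q⁻¹) ^ m) := by
    intro m
    rw [hC]
    have hqpow : q ^ m ≠ 0 := pow_ne_zero _ hq0
    have hgeom : (∑ i ∈ Finset.range m, (q : ℝ) ^ i) = (q ^ m - 1) / (q - 1) :=
      geom_sum_eq hq1 m
    have hcast : ((-(k * ∑ i ∈ Finset.range m, (d ^ n) ^ i) : ℤ) : ℝ)
        = -(k : ℝ) * ((q ^ m - 1) / (q - 1)) := by
      push_cast
      rw [← hgeom]
      ring
    have hdq : (d : ℝ) ^ (n * m) = q ^ m := by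
      rw [hq, ← pow_mul]
    simp only [tr, hcast, hdq]
    field_simp
    have hinv : q ^ m * (k : ℝ) * q⁻¹ ^ m = k := by
      rw [inv_pow, mul_right_comm, mul_inv_cancel₀ hqpow, one_mul]
    linear_combination -hinv
  have h1 : Filter.Tendsto (fun m : ℕ => (F^[n * m] x).1 / (d : ℝ) ^ (n * m))
      Filter.atTop (nhds ((k : ℝ) / ((d : ℝ) ^ n - 1))) := by
    apply hlim.comp
    apply Filter.tendsto_atTop_atTop.mpr
    intro b
    exact ⟨b, fun m hm => le_trans hm (Nat.le_mul_of_pos_left m (by omega))⟩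
  have h2 : Filter.Tendsto (fun m : ℕ =>
      (k : ℝ) / (q - 1) - (k : ℝ) / (q - 1) * (q⁻¹) ^ m)
      Filter.atTop (nhds ((k : ℝ) / (q - 1))) := by
    have habs : |q⁻¹| < 1 := by
      rw [abs_inv]
      rw [inv_lt_one_iff₀]
      right; exact hqabs
    have := tendsto_pow_atTop_nhds_zero_of_abs_lt_one habs
    have h3 := this.const_mul ((k : ℝ) / (q - 1))
    have h4 := (tendsto_const_nhds (x := (k : ℝ) / (q - 1)) (f := Filter.atTop (α := ℕ))).sub h3
    simpa using h4
  have hfinal := h1.sub h2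
  rw [show (k : ℝ) / ((d : ℝ) ^ n - 1) - (k : ℝ) / (q - 1) = 0 by rw [hq]; ring]
    at hfinal
  have heq : (fun m : ℕ => (G^[m] x).1 / ((d : ℝ) ^ n) ^ m)
      = fun m : ℕ => (F^[n * m] x).1 / (d : ℝ) ^ (n * m)
        - ((k : ℝ) / (q - 1) - (k : ℝ) / (q - 1) * (q⁻¹) ^ m) := by
    funext m
    rw [← key m, hq]
  rw [heq]
  exact hfinal
end
end
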